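/- Let Δ ⊆ ℕ^n be a diagram of finite type and π: ℕ^n → ℕ^i the projection onto the first i coordinates. Then π(Δ) is a diagram of finite type in ℕ^i. -/

import Mathlib

/-- `Δ ⊆ ℕ^n` is a diagram if `Δ + ℕ^n ⊆ Δ`. -/
def IsDiagram {n : ℕ} (Δ : Set (Fin n → ℕ)) : Prop :=
  ∀ α ∈ Δ, ∀ β : Fin n → ℕ, α + β ∈ Δ

/-- A diagram `Δ ⊆ ℕ^n` is of finite type if for all `i < j` and every `α ∈ Δ`
there is `a ∈ ℕ` such that the element obtained from `α` by setting the `j`-th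
coordinate to `0` and adding `a` to the `i`-th coordinate is again in `Δ`. -/
def IsFiniteTypeDiagram {n : ℕ} (Δ : Set (Fin n → ℕ)) : Prop :=
  ∀ i j : Fin n, i < j → ∀ α ∈ Δ,
    ∃ a : ℕ, Function.update (Function.update α j 0) i (α i + a) ∈ Δ

/-- The projection `π_{ni} : ℕ^n → ℕ^i` onto the first `i` coordinates. -/
def projFirst {i n : ℕ} (h : i ≤ n) (α : Fin n → ℕ) : Fin i → ℕ :=
  fun k => α ⟨k, lt_of_lt_of_le k.isLt h⟩

/-- If `Δ ⊆ ℕ^n` is a diagram of finite type and `π : ℕ^n → ℕ^i` is the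
projection onto the first `i` coordinates, then `π(Δ)` is a diagram of finite
type in `ℕ^i`. -/
theorem image_proj_isFiniteTypeDiagram {n : ℕ} (Δ : Set (Fin n → ℕ))
    (hΔ : IsDiagram Δ) (hft : IsFiniteTypeDiagram Δ) (i : ℕ) (h : i ≤ n) :
    IsDiagram (projFirst h '' Δ) ∧ IsFiniteTypeDiagram (projFirst h '' Δ) := by
  constructor
  · rintro _ ⟨α, hα, rfl⟩ β
    refine ⟨α + (fun m : Fin n => if hm : (m : ℕ) < i then β ⟨m, hm⟩ else 0),
      hΔ α hα _, ?_⟩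
    funext k
    simp [projFirst, k.isLt]
  · rintro k l hkl _ ⟨α, hα, rfl⟩
    set k' : Fin n := ⟨k, lt_of_lt_of_le k.isLt h⟩
    set l' : Fin n := ⟨l, lt_of_lt_of_le l.isLt h⟩
    have hkl' : k' < l' := hkl
    obtain ⟨a, ha⟩ := hft k' l' hkl' α hα
    refine ⟨a, _, ha, ?_⟩
    funext m
    set m' : Fin n := ⟨m, lt_of_lt_of_le m.isLt h⟩
    have hk : (m = k) ↔ (m' = k') := by
      constructor <;> intro hh <;> [subst hh; skip] <;>
        simp_all [m', k', Fin.ext_iff]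
    have hl : (m = l) ↔ (m' = l') := by
      constructor <;> intro hh <;> [subst hh; skip] <;>
        simp_all [m', l', Fin.ext_iff]
    by_cases h1 : m = k
    · simp [projFirst, Function.update, h1, hk.mp h1, k', l', m', Fin.ext_iff]
    · by_cases h2 : m = l
      · simp [projFirst, Function.update, h1, h2, hk.not.mp h1, hl.mp h2, hkl.ne', hkl'.ne', k', l', m', Fin.ext_iff]
      · simp [projFirst, Function.update, h1, h2, hk.not.mp h1, hl.not.mp h2, k', l', m', Fin.ext_iff]
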